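/- Among the seven points P₁,…,P₇ given in the explicit coordinate representation (with y-coordinates rational multiples of √2002 as in the previous statement), no three points are collinear. -/

import Mathlib

noncomputable def pt (x y : ℝ) : EuclideanSpace ℝ (Fin 2) := !₂[x, y]

/-- The seven points of the first integral heptagon in general position. -/
noncomputable def P : Fin 7 → EuclideanSpace ℝ (Fin 2) :=
  ![pt 0 0,
    pt 22270 0,
    pt (26127018 / 2227) ((932064 / 2227) * Real.sqrt 2002),
    pt (245363 / 17) ((3144 / 17) * Real.sqrt 2002),
    pt (17615968 / 2227) ((238464 / 2227) * Real.sqrt 2002),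
    pt (56068 / 17) ((3144 / 17) * Real.sqrt 2002),
    pt (19079044 / 2227) (-(54168 / 2227) * Real.sqrt 2002)]

lemma collinear_det {p q r : EuclideanSpace ℝ (Fin 2)} (h : Collinear ℝ {p, q, r}) :
    (q 0 - p 0) * (r 1 - p 1) - (q 1 - p 1) * (r 0 - p 0) = 0 := by
  obtain ⟨v, hv⟩ := (collinear_iff_of_mem (Set.mem_insert p _)).mp h
  obtain ⟨a, ha⟩ := hv q (by simp)
  obtain ⟨b, hb⟩ := hv r (by simp)
  have h1 : q 0 - p 0 = a * v 0 := by rw [ha]; simp [PiLp.add_apply, PiLp.smul_apply]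
  have h2 : q 1 - p 1 = a * v 1 := by rw [ha]; simp [PiLp.add_apply, PiLp.smul_apply]
  have h3 : r 0 - p 0 = b * v 0 := by rw [hb]; simp [PiLp.add_apply, PiLp.smul_apply]
  have h4 : r 1 - p 1 = b * v 1 := by rw [hb]; simp [PiLp.add_apply, PiLp.smul_apply]
  rw [h1, h2, h3, h4]; ring

lemma e00 : P ⟨0, by omega⟩ 0 = (0:ℝ) := rfl
lemma e01 : P ⟨0, by omega⟩ 1 = (0:ℝ) := rfl
lemma e10 : P ⟨1, by omega⟩ 0 = 22270 := rfl
lemma e11 : P ⟨1, by omega⟩ 1 = (0:ℝ) := rfl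
lemma e20 : P ⟨2, by omega⟩ 0 = 26127018 / 2227 := rfl
lemma e21 : P ⟨2, by omega⟩ 1 = (932064 / 2227) * Real.sqrt 2002 := rfl
lemma e30 : P ⟨3, by omega⟩ 0 = 245363 / 17 := rfl
lemma e31 : P ⟨3, by omega⟩ 1 = (3144 / 17) * Real.sqrt 2002 := rfl
lemma e40 : P ⟨4, by omega⟩ 0 = 17615968 / 2227 := rfl
lemma e41 : P ⟨4, by omega⟩ 1 = (238464 / 2227) * Real.sqrt 2002 := rfl
lemma e50 : P ⟨5, by omega⟩ 0 = 56068 / 17 := rfl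
lemma e51 : P ⟨5, by omega⟩ 1 = (3144 / 17) * Real.sqrt 2002 := rfl
lemma e60 : P ⟨6, by omega⟩ 0 = 19079044 / 2227 := rfl
lemma e61 : P ⟨6, by omega⟩ 1 = -(54168 / 2227) * Real.sqrt 2002 := rfl

set_option maxHeartbeats 4000000 in
/-- No three of the seven heptagon points are collinear. -/
theorem heptagon_no_three_collinear :
    ∀ i j k : Fin 7, i ≠ j → i ≠ k → j ≠ k →
      ¬ Collinear ℝ ({P i, P j, P k} : Set (EuclideanSpace ℝ (Fin 2))) := by
  intro i j k hij hik hjk hcol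
  have hd := collinear_det hcol
  have hs : (0:ℝ) < Real.sqrt 2002 := Real.sqrt_pos.mpr (by norm_num)
  fin_cases i <;> fin_cases j <;> fin_cases k <;>
    first
      | exact hij rfl
      | exact hik rfl
      | exact hjk rfl
      | (simp only [e00, e01, e10, e11, e20, e21, e30, e31, e40, e41, e50, e51, e60, e61] at hd;
         ring_nf at hd; nlinarith [hs, hd])
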